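/- Fix x = X^ζ w̃ ∈ W with ζ = μ + mδ + lΛ_0 of positive level l and w̃ = Y^λ w (λ ∈ Q, w ∈ W_fin), and fix ν ∈ Φ_fin. Then (r,j) ∈ Γ_{x,ν} if and only if both of the following hold: (a) j > 0, or (j = 0 and r > 0), or (j = 0, r = 0 and ν > 0); and (b) j < −⟨μ,ν⟩ − lr, or (j = −⟨μ,ν⟩ − lr and r < −⟨λ,ν⟩), or (j = −⟨μ,ν⟩ − lr, r = −⟨λ,ν⟩ and w^{−1}(ν) < 0). In particular, the lower outer edge of Γ_{x,ν} consists of points (r,0) with 0 ≤ r ≤ ⟨ν,μ⟩/(−l), and the upper outer edge consists of points (r, −⟨μ,ν⟩ − lr) with r ≤ min{⟨ν,μ⟩/(−l), −⟨λ,ν⟩}. -/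
import Mathlib


/-!
Common framework for the double affine Weyl semigroup of Welch,
"Double Affine Bruhat Order".

Encoding conventions:
* `P` is the finite weight lattice `P_fin` (an additive abelian group) equipped with
  an integer-valued pairing `pair` (the normalized simply-laced pairing, identifying
  roots and coroots).
* A finite root is an element of the set `Φfin ⊆ P`; `finPos` is the set of
  positive finite roots.
* An affine root `ν + rδ` is encoded as the pair `(ν, r) : P × ℤ`.
* An affine weight `ζ = μ + mδ + lΛ₀ ∈ X` is encoded as `(μ, m, l) : P × ℤ × ℤ`.
* A double affine root `ν + rδ + jπ` is encoded as `(ν, r, j) : P × ℤ × ℤ`.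
* `G` is the affine Weyl group `W_aff` (an abstract group), acting on affine
  roots via `ract` and on `X` via `xact`; `saff α̃` is the reflection `s_{α̃}`,
  `Ytr λ` is the translation `Y^λ`.
* An element `X^ζ w̃` of the group `X ⋊ W_aff` (in particular of the double affine
  Weyl semigroup `W`, whose elements are those with `ζ` in the Tits cone) is encoded
  as the pair `(ζ, w̃) : (P × ℤ × ℤ) × G`.
-/

namespace DoubleAffineBruhat

/-- Positivity of an affine root `ν + rδ`, encoded as the pair `(ν, r)`:
`ν + rδ > 0` iff `r > 0`, or `r = 0` and `ν` is a positive finite root. -/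
def aPos {P : Type} (finPos : Set P) (a : P × ℤ) : Prop :=
  0 < a.2 ∨ (a.2 = 0 ∧ a.1 ∈ finPos)

/-- The pairing of an affine weight `ζ = μ + mδ + lΛ₀`, encoded as `(μ, m, l)`,
with an affine root `ν + rδ`, encoded as `(ν, r)`:
`⟨ζ, ν + rδ⟩ = ⟨μ, ν⟩ + l·r`. -/
def xpair {P : Type} (pair : P → P → ℤ) (ζ : P × ℤ × ℤ) (a : P × ℤ) : ℤ :=
  pair ζ.1 a.1 + ζ.2.2 * a.2

/-- The level of an affine weight. -/
def level {P : Type} (ζ : P × ℤ × ℤ) : ℤ := ζ.2.2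

/-- The Tits cone `𝒯 = {mδ : m ∈ ℤ} ∪ {μ + mδ + lΛ₀ : l > 0}`. -/
def Tits (P : Type) [AddCommGroup P] : Set (P × ℤ × ℤ) :=
  {ζ | (ζ.1 = 0 ∧ ζ.2.2 = 0) ∨ 0 < ζ.2.2}

/-- Positivity of a double affine root `α = α̃ + jπ` encoded as `(ν, r, j)`
(with `α̃ = ν + rδ`): positive iff (`α̃ > 0` and `j ≥ 0`) or (`α̃ < 0` and `j > 0`). -/
def dPos {P : Type} [AddCommGroup P] (finPos : Set P) (a : P × ℤ × ℤ) : Prop :=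
  (aPos finPos (a.1, a.2.1) ∧ 0 ≤ a.2.2) ∨ (aPos finPos (-a.1, -a.2.1) ∧ 0 < a.2.2)

variable {P G : Type} [AddCommGroup P] [Group G]

/-- Multiplication in the group `X ⋊ W_aff`:
`(X^ζ g)(X^η h) = X^{ζ + gη} (gh)`, where `xact` is the action of `W_aff` on `X`. -/
def dwmul (xact : G → P × ℤ × ℤ → P × ℤ × ℤ) (x y : (P × ℤ × ℤ) × G) :
    (P × ℤ × ℤ) × G :=
  (x.1 + xact x.2 y.1, x.2 * y.2)

/-- Inversion in the group `X ⋊ W_aff`: `(X^ζ g)⁻¹ = X^{-g⁻¹ζ} g⁻¹`. -/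
def dwinv (xact : G → P × ℤ × ℤ → P × ℤ × ℤ) (x : (P × ℤ × ℤ) × G) :
    (P × ℤ × ℤ) × G :=
  (-(xact x.2⁻¹ x.1), x.2⁻¹)

/-- Action of `X^ζ g ∈ X ⋊ W_aff` on double affine roots:
`X^ζ g (α̃ + jπ) = g(α̃) + (j - ⟨ζ, g(α̃)⟩)π`, where `ract` is the action of
`W_aff` on affine roots. -/
def dact (pair : P → P → ℤ) (ract : G → P × ℤ → P × ℤ)
    (x : (P × ℤ × ℤ) × G) (a : P × ℤ × ℤ) : P × ℤ × ℤ :=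
  ((ract x.2 (a.1, a.2.1)).1, (ract x.2 (a.1, a.2.1)).2,
    a.2.2 - xpair pair x.1 (ract x.2 (a.1, a.2.1)))

/-- The reflection `s_α = X^{-j(ν + rδ)} s_{ν + rδ} ∈ X ⋊ W_aff` associated to the
double affine root `α = ν + rδ + jπ`. -/
def dref (saff : P × ℤ → G) (a : P × ℤ × ℤ) : (P × ℤ × ℤ) × G :=
  ((-a.2.2 • a.1, -(a.2.2 * a.2.1), 0), saff (a.1, a.2.1))

/-- All the data of the double affine setting together with the structural facts
that hold in it (context facts; `Φ_fin` irreducible and simply laced, normalized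
pairing, Coxeter facts for `W_aff`, etc.). -/
structure Ctx (P G : Type) [AddCommGroup P] [Group G] where
  /-- the normalized pairing on the finite weight lattice -/
  pair : P → P → ℤ
  /-- the set of finite roots `Φ_fin` -/
  Φfin : Set P
  /-- the set of positive finite roots -/
  finPos : Set P
  /-- the number of finite simple roots (the affine simple roots are `α_0, …, α_n`) -/
  n : ℕ
  /-- the affine simple roots `α_0, …, α_n` -/
  simple : Fin (n + 1) → P × ℤ
  /-- the action of `W_aff` on affine roots -/
  ract : G → P × ℤ → P × ℤ
  /-- the action of `W_aff` on the affine weight lattice `X` -/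
  xact : G → P × ℤ × ℤ → P × ℤ × ℤ
  /-- the reflection `s_{α̃} ∈ W_aff` of an affine root `α̃` -/
  saff : P × ℤ → G
  /-- the translation `Y^λ ∈ W_aff` -/
  Ytr : P → G
  /-- the linear functional `⟨·, 2ρ⟩`, `ρ` the sum of the affine fundamental weights;
  an affine root `ν + rδ` is paired as the weight `(ν, r, 0)` -/
  rho2 : P × ℤ × ℤ → ℤ
  /-- `ζ ↦ ζ₊`, the dominant representative of the `W_aff`-orbit of `ζ` (for `ζ ∈ 𝒯`) -/
  domRep : P × ℤ × ℤ → P × ℤ × ℤ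
  pair_add_left : ∀ μ ν γ, pair (μ + ν) γ = pair μ γ + pair ν γ
  pair_add_right : ∀ μ ν γ, pair μ (ν + γ) = pair μ ν + pair μ γ
  pair_symm : ∀ μ ν, pair μ ν = pair ν μ
  pair_norm : ∀ ν ∈ Φfin, pair ν ν = 2
  pair_bound : ∀ ν ∈ Φfin, ∀ γ ∈ Φfin, pair ν γ ≤ 2
  pair_two_eq : ∀ ν ∈ Φfin, ∀ γ ∈ Φfin, pair ν γ = 2 → ν = γ
  root_neg : ∀ ν ∈ Φfin, -ν ∈ Φfin
  pos_trichotomy : ∀ ν ∈ Φfin, (ν ∈ finPos ↔ ¬(-ν ∈ finPos))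
  simple_root : ∀ i, (simple i).1 ∈ Φfin
  simple_pos : ∀ i, aPos finPos (simple i)
  ract_one : ∀ a, ract 1 a = a
  ract_mul : ∀ g h a, ract (g * h) a = ract g (ract h a)
  ract_neg : ∀ g a, ract g (-a) = -(ract g a)
  ract_root : ∀ g (a : P × ℤ), a.1 ∈ Φfin → (ract g a).1 ∈ Φfin
  xact_one : ∀ ζ, xact 1 ζ = ζ
  xact_mul : ∀ g h ζ, xact (g * h) ζ = xact g (xact h ζ)
  xact_add : ∀ g ζ η, xact g (ζ + η) = xact g ζ + xact g η
  xact_level : ∀ g ζ, (xact g ζ).2.2 = ζ.2.2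
  xact_pair : ∀ g ζ a, xpair pair (xact g ζ) (ract g a) = xpair pair ζ a
  saff_act : ∀ (ν : P) (r : ℤ) (γ : P) (p : ℤ),
    ract (saff (ν, r)) (γ, p) = (γ - pair ν γ • ν, p - r * pair ν γ)
  saff_invol : ∀ a : P × ℤ, saff a * saff a = 1
  saff_neg : ∀ a : P × ℤ, saff (-a) = saff a
  Ytr_act : ∀ (lam ν : P) (r : ℤ), ract (Ytr lam) (ν, r) = (ν, r - pair lam ν)
  decomp : ∀ g : G, ∃ (lam : P) (wf : G), g = Ytr lam * wf ∧
    ∀ (ν : P) (r : ℤ), ract wf (ν, r) = ((ract wf (ν, 0)).1, r)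
  invFin : ∀ g : G,
    {a : P × ℤ | a.1 ∈ Φfin ∧ aPos finPos a ∧ aPos finPos (-(ract g a))}.Finite
  domRep_mem : ∀ ζ : P × ℤ × ℤ, ζ ∈ Tits P → ∃ g : G, xact g ζ = domRep ζ
  domRep_dom : ∀ ζ : P × ℤ × ℤ, ζ ∈ Tits P → ∀ i, 0 ≤ xpair pair (domRep ζ) (simple i)
  domRep_eq : ∀ ζ : P × ℤ × ℤ, ζ ∈ Tits P →
    ∀ g : G, (∀ i, 0 ≤ xpair pair (xact g ζ) (simple i)) → xact g ζ = domRep ζ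
  rho2_add : ∀ ζ η, rho2 (ζ + η) = rho2 ζ + rho2 η
  rho2_simple : ∀ i, rho2 ((simple i).1, (simple i).2, 0) = 2

/-- The inversion set `Inv(g) = {α̃ ∈ Φ_aff : α̃ > 0, g(α̃) < 0}`. -/
def InvA (C : Ctx P G) (g : G) : Set (P × ℤ) :=
  {a | a.1 ∈ C.Φfin ∧ aPos C.finPos a ∧ aPos C.finPos (-(C.ract g a))}

/-- The Coxeter length of `g ∈ W_aff`, via `ℓ(g) = |Inv(g)|`. -/
noncomputable def alen (C : Ctx P G) (g : G) : ℤ := ((InvA C g).ncard : ℤ)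

/-- `ζ ∈ X` is dominant: `⟨ζ, α_i⟩ ≥ 0` for all affine simple roots. -/
def dominant (C : Ctx P G) (ζ : P × ℤ × ℤ) : Prop :=
  ∀ i, 0 ≤ xpair C.pair ζ (C.simple i)

/-- `ζ ∈ X` is regular: `⟨ζ, α̃⟩ ≠ 0` for all affine roots `α̃`. -/
def regular (C : Ctx P G) (ζ : P × ℤ × ℤ) : Prop :=
  ∀ a : P × ℤ, a.1 ∈ C.Φfin → xpair C.pair ζ a ≠ 0

/-- The length of `x = X^ζ w̃ ∈ W`:
`ℓ(x) = ⟨ζ₊, 2ρ⟩ + #{α̃ ∈ Inv(w̃⁻¹) : ⟨ζ, α̃⟩ ≤ 0} - #{α̃ ∈ Inv(w̃⁻¹) : ⟨ζ, α̃⟩ > 0}`. -/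
noncomputable def dlen (C : Ctx P G) (x : (P × ℤ × ℤ) × G) : ℤ :=
  C.rho2 (C.domRep x.1)
    + ((InvA C x.2⁻¹ ∩ {a | xpair C.pair x.1 a ≤ 0}).ncard : ℤ)
    - ((InvA C x.2⁻¹ ∩ {a | 0 < xpair C.pair x.1 a}).ncard : ℤ)

/-- One generating step of the double affine Bruhat order:
`bstep C x y` holds iff `x` has positive level and `y = s_α x` for some positive
double affine root `α` with `x⁻¹(α) < 0`. -/
def bstep (C : Ctx P G) (x y : (P × ℤ × ℤ) × G) : Prop :=
  0 < level x.1 ∧ ∃ a : P × ℤ × ℤ, a.1 ∈ C.Φfin ∧ dPos C.finPos a ∧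
    dPos C.finPos (-(dact C.pair C.ract (dwinv C.xact x) a)) ∧
    y = dwmul C.xact (dref C.saff a) x

/-- `bge C x y` means `x ≥ y` in the double affine Bruhat order (the order generated
by the relations `s_α x < x`). -/
def bge (C : Ctx P G) (x y : (P × ℤ × ℤ) × G) : Prop :=
  Relation.ReflTransGen (bstep C) x y

/-- `blt C y x` means `y < x` in the double affine Bruhat order. -/
def blt (C : Ctx P G) (y x : (P × ℤ × ℤ) × G) : Prop :=
  bge C x y ∧ y ≠ x

/-- `y` is a cocover of `x`: `y < x` and there is no `z` with `y < z < x`. -/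
def cocover (C : Ctx P G) (y x : (P × ℤ × ℤ) × G) : Prop :=
  blt C y x ∧ ¬∃ z : (P × ℤ × ℤ) × G, blt C y z ∧ blt C z x

/-- A double affine root `b` "corresponds to a point of the lower graph of `x`
(corresponding to `fin b`)": `b > 0` and `x⁻¹(b) < 0`. -/
def inGraph (C : Ctx P G) (x : (P × ℤ × ℤ) × G) (b : P × ℤ × ℤ) : Prop :=
  dPos C.finPos b ∧ dPos C.finPos (-(dact C.pair C.ract (dwinv C.xact x) b))

/-- The lower graph `Γ_{x,ν} = {(r,j) : ν + rδ + jπ > 0 and x⁻¹(ν + rδ + jπ) < 0}`. -/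
def Gamma (C : Ctx P G) (x : (P × ℤ × ℤ) × G) (ν : P) : Set (ℤ × ℤ) :=
  {rj | inGraph C x (ν, rj.1, rj.2)}

/-- `a` is a corner of the lower graph `Γ_{x, fin(a)}`. -/
def IsCorner (C : Ctx P G) (x : (P × ℤ × ℤ) × G) (a : P × ℤ × ℤ) : Prop :=
  inGraph C x a ∧
    ∀ b : P × ℤ × ℤ, b.1 = a.1 → b ≠ a → inGraph C x b →
      ¬ inGraph C x (-(dact C.pair C.ract (dref C.saff a) b))

/-- The length difference set
`L_{x,α} = {β ∈ Φ : β > 0, x⁻¹(β) < 0, s_α(β) < 0, x⁻¹ s_α(β) > 0}`. -/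
def Ldiff (C : Ctx P G) (x : (P × ℤ × ℤ) × G) (a : P × ℤ × ℤ) :
    Set (P × ℤ × ℤ) :=
  {b | b.1 ∈ C.Φfin ∧ dPos C.finPos b ∧
    dPos C.finPos (-(dact C.pair C.ract (dwinv C.xact x) b)) ∧
    dPos C.finPos (-(dact C.pair C.ract (dref C.saff a) b)) ∧
    dPos C.finPos (dact C.pair C.ract (dwinv C.xact x) (dact C.pair C.ract (dref C.saff a) b))}

/-- explicit description of the lower graph `Γ_{x,ν}` for
`x = X^{μ + mδ + lΛ₀} Y^λ w`, together with the bounds on its lower and upper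
outer edges. -/
theorem statement8 {P G : Type} [AddCommGroup P] [Group G] (C : Ctx P G)
    (μ : P) (m l : ℤ) (hl : 0 < l)
    (lam : P) (wf : G)
    (hwf : ∀ (ν : P) (r : ℤ), C.ract wf (ν, r) = ((C.ract wf (ν, 0)).1, r))
    (g : G) (hg : g = C.Ytr lam * wf)
    (x : (P × ℤ × ℤ) × G) (hx : x = ((μ, m, l), g))
    (ν : P) (hν : ν ∈ C.Φfin) :
    (∀ r j : ℤ, (r, j) ∈ Gamma C x ν ↔
      ((0 < j ∨ (j = 0 ∧ 0 < r) ∨ (j = 0 ∧ r = 0 ∧ ν ∈ C.finPos)) ∧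
       (j < -(C.pair μ ν) - l * r ∨
        (j = -(C.pair μ ν) - l * r ∧ r < -(C.pair lam ν)) ∨
        (j = -(C.pair μ ν) - l * r ∧ r = -(C.pair lam ν) ∧
          -((C.ract wf⁻¹ (ν, 0)).1) ∈ C.finPos)))) ∧
    (∀ r : ℤ, (r, 0) ∈ Gamma C x ν →
      0 ≤ r ∧ (r : ℚ) ≤ (C.pair ν μ : ℚ) / (-(l : ℚ))) ∧
    (∀ r : ℤ, (r, -(C.pair μ ν) - l * r) ∈ Gamma C x ν →
      (r : ℚ) ≤ min ((C.pair ν μ : ℚ) / (-(l : ℚ))) ((-(C.pair lam ν) : ℤ) : ℚ)) := by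
  subst hg hx
  -- basic linearity facts for the pairing
  have pair_zero_left : ∀ γ : P, C.pair 0 γ = 0 := by
    intro γ
    have h := C.pair_add_left 0 0 γ
    rw [add_zero] at h
    omega
  have pair_neg_left : ∀ (μ' γ : P), C.pair (-μ') γ = -C.pair μ' γ := by
    intro μ' γ
    have h := C.pair_add_left μ' (-μ') γ
    rw [add_neg_cancel, pair_zero_left] at h
    omega
  -- action inverses
  have ract_inv : ∀ (h : G) (a : P × ℤ), C.ract h⁻¹ (C.ract h a) = a := by
    intro h a
    rw [← C.ract_mul, inv_mul_cancel, C.ract_one]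
  set w' := (C.ract wf⁻¹ (ν, 0)).1 with hw'
  have hwfinv : ∀ s : ℤ, C.ract wf⁻¹ (ν, s) = (w', s) := by
    intro s
    have h1 : C.ract wf (C.ract wf⁻¹ (ν, s)) = (ν, s) := by
      rw [← C.ract_mul, mul_inv_cancel, C.ract_one]
    set a := C.ract wf⁻¹ (ν, s) with ha
    have h2 : C.ract wf (a.1, a.2) = ((C.ract wf (a.1, 0)).1, a.2) := hwf a.1 a.2
    rw [Prod.mk.eta] at h2
    rw [h2] at h1
    have h3 : (C.ract wf (a.1, 0)).1 = ν := congrArg Prod.fst h1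
    have h4 : a.2 = s := congrArg Prod.snd h1
    have h5 : C.ract wf (a.1, 0) = (ν, 0) := by
      rw [hwf a.1 0, h3]
    have h6 : C.ract wf⁻¹ (ν, 0) = (a.1, 0) := by
      rw [← h5, ract_inv]
    have h7 : w' = a.1 := by rw [hw', h6]
    exact Prod.ext h7.symm h4
  have hgν : ∀ r : ℤ, C.ract (C.Ytr lam * wf)⁻¹ (ν, r) = (w', r + C.pair lam ν) := by
    intro r
    rw [mul_inv_rev, C.ract_mul]
    have h2 : C.ract (C.Ytr lam) (ν, r + C.pair lam ν) = (ν, r) := by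
      rw [C.Ytr_act, add_sub_cancel_right]
    have h1 : C.ract (C.Ytr lam)⁻¹ (ν, r) = (ν, r + C.pair lam ν) := by
      rw [← h2, ract_inv]
    rw [h1, hwfinv]
  -- the pairing part of the action of x⁻¹
  have hnegpair : ∀ (η : P × ℤ × ℤ) (a : P × ℤ),
      xpair C.pair (-η) a = -(xpair C.pair η a) := by
    intro η a
    simp only [xpair, Prod.fst_neg, Prod.snd_neg, pair_neg_left]
    ring
  have hxpair : ∀ r : ℤ,
      xpair C.pair (-(C.xact (C.Ytr lam * wf)⁻¹ (μ, m, l)))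
        (C.ract (C.Ytr lam * wf)⁻¹ (ν, r)) = -(C.pair μ ν + l * r) := by
    intro r
    rw [hnegpair]
    rw [C.xact_pair (C.Ytr lam * wf)⁻¹ (μ, m, l) (ν, r)]
    simp [xpair]
  -- explicit form of the action of x⁻¹ on double affine roots
  have hdact : ∀ r j : ℤ,
      dact C.pair C.ract (dwinv C.xact ((μ, m, l), C.Ytr lam * wf)) (ν, r, j)
        = (w', r + C.pair lam ν, j + (C.pair μ ν + l * r)) := by
    intro r j
    have hxp := hxpair r
    rw [hgν] at hxp
    simp only [dact, dwinv]
    rw [hgν, hxp]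
    simp only [Prod.mk.injEq, true_and]
    omega
  have hmem : ∀ r j : ℤ, ((r, j) ∈ Gamma C ((μ, m, l), C.Ytr lam * wf) ν ↔
      dPos C.finPos (ν, r, j) ∧
      dPos C.finPos (-(w', r + C.pair lam ν, j + (C.pair μ ν + l * r)))) := by
    intro r j
    simp only [Gamma, Set.mem_setOf_eq, inGraph, hdact]
  have hw'root : w' ∈ C.Φfin := C.ract_root wf⁻¹ (ν, 0) hν
  have htrν := C.pos_trichotomy ν hν
  have htw := C.pos_trichotomy w' hw'root
  have iffA : ∀ r j : ℤ, dPos C.finPos (ν, r, j) ↔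
      (0 < j ∨ (j = 0 ∧ 0 < r) ∨ (j = 0 ∧ r = 0 ∧ ν ∈ C.finPos)) := by
    intro r j
    simp only [dPos, aPos]
    constructor
    · rintro (⟨ha, hj⟩ | ⟨ha, hj⟩)
      · rcases lt_or_eq_of_le hj with hj' | hj'
        · exact Or.inl hj'
        · rcases ha with hr | ⟨hr, hν'⟩
          · exact Or.inr (Or.inl ⟨hj'.symm, hr⟩)
          · exact Or.inr (Or.inr ⟨hj'.symm, hr, hν'⟩)
      · exact Or.inl hj
    · rintro (hj | ⟨hj, hr⟩ | ⟨hj, hr, hν'⟩)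
      · rcases lt_trichotomy r 0 with hr | hr | hr
        · exact Or.inr ⟨Or.inl (by omega), hj⟩
        · by_cases hp : ν ∈ C.finPos
          · exact Or.inl ⟨Or.inr ⟨hr, hp⟩, le_of_lt hj⟩
          · have hnp : -ν ∈ C.finPos := by
              by_contra hc; exact hp (htrν.mpr hc)
            exact Or.inr ⟨Or.inr ⟨by omega, hnp⟩, hj⟩
        · exact Or.inl ⟨Or.inl hr, le_of_lt hj⟩
      · exact Or.inl ⟨Or.inl hr, le_of_eq hj.symm⟩
      · exact Or.inl ⟨Or.inr ⟨hr, hν'⟩, le_of_eq hj.symm⟩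
  have iffB : ∀ R J : ℤ, dPos C.finPos (-(w', R, J)) ↔
      (J < 0 ∨ (J = 0 ∧ R < 0) ∨ (J = 0 ∧ R = 0 ∧ -w' ∈ C.finPos)) := by
    intro R J
    simp only [dPos, aPos, Prod.fst_neg, Prod.snd_neg, neg_neg]
    constructor
    · rintro (⟨ha, hJ⟩ | ⟨ha, hJ⟩)
      · rcases lt_or_eq_of_le hJ with hJ' | hJ'
        · exact Or.inl (by omega)
        · rcases ha with hR | ⟨hR, hw⟩
          · exact Or.inr (Or.inl ⟨by omega, by omega⟩)
          · exact Or.inr (Or.inr ⟨by omega, by omega, hw⟩)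
      · exact Or.inl (by omega)
    · rintro (hJ | ⟨hJ, hR⟩ | ⟨hJ, hR, hw⟩)
      · rcases lt_trichotomy R 0 with hR | hR | hR
        · exact Or.inl ⟨Or.inl (by omega), by omega⟩
        · by_cases hp : w' ∈ C.finPos
          · exact Or.inr ⟨Or.inr ⟨hR, hp⟩, by omega⟩
          · have hnp : -w' ∈ C.finPos := by
              by_contra hc; exact hp (htw.mpr hc)
            exact Or.inl ⟨Or.inr ⟨by omega, hnp⟩, by omega⟩
        · exact Or.inr ⟨Or.inl hR, by omega⟩
      · exact Or.inl ⟨Or.inl (by omega), by omega⟩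
      · exact Or.inl ⟨Or.inr ⟨by omega, hw⟩, by omega⟩
  have main : ∀ r j : ℤ, (r, j) ∈ Gamma C ((μ, m, l), C.Ytr lam * wf) ν ↔
      ((0 < j ∨ (j = 0 ∧ 0 < r) ∨ (j = 0 ∧ r = 0 ∧ ν ∈ C.finPos)) ∧
       (j < -(C.pair μ ν) - l * r ∨
        (j = -(C.pair μ ν) - l * r ∧ r < -(C.pair lam ν)) ∨
        (j = -(C.pair μ ν) - l * r ∧ r = -(C.pair lam ν) ∧ -w' ∈ C.finPos))) := by
    intro r j
    rw [hmem r j, iffA r j, iffB (r + C.pair lam ν) (j + (C.pair μ ν + l * r))]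
    constructor
    · rintro ⟨hA, hB⟩
      refine ⟨hA, ?_⟩
      rcases hB with h | ⟨h1, h2⟩ | ⟨h1, h2, h3⟩
      · exact Or.inl (by omega)
      · exact Or.inr (Or.inl ⟨by omega, by omega⟩)
      · exact Or.inr (Or.inr ⟨by omega, by omega, h3⟩)
    · rintro ⟨hA, hB⟩
      refine ⟨hA, ?_⟩
      rcases hB with h | ⟨h1, h2⟩ | ⟨h1, h2, h3⟩
      · exact Or.inl (by omega)
      · exact Or.inr (Or.inl ⟨by omega, by omega⟩)
      · exact Or.inr (Or.inr ⟨by omega, by omega, h3⟩)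
  have hlq : (-(l : ℚ)) < 0 := by
    have : (0 : ℚ) < (l : ℚ) := by exact_mod_cast hl
    linarith
  have hdivle : ∀ r : ℤ, l * r + C.pair μ ν ≤ 0 →
      (r : ℚ) ≤ (C.pair ν μ : ℚ) / (-(l : ℚ)) := by
    intro r h
    rw [le_div_iff_of_neg hlq]
    have h2 : C.pair ν μ ≤ -(l * r) := by rw [C.pair_symm]; omega
    have h3 : (C.pair ν μ : ℚ) ≤ -((l : ℚ) * (r : ℚ)) := by exact_mod_cast h2
    nlinarith
  refine ⟨main, ?_, ?_⟩
  · intro r hr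
    rw [main r 0] at hr
    obtain ⟨hA, hB⟩ := hr
    have h0r : 0 ≤ r := by
      rcases hA with h | ⟨_, h⟩ | ⟨_, h, _⟩ <;> omega
    have hlr : l * r + C.pair μ ν ≤ 0 := by
      rcases hB with h | ⟨h, _⟩ | ⟨h, _, _⟩ <;> omega
    exact ⟨h0r, hdivle r hlr⟩
  · intro r hr
    rw [main r (-(C.pair μ ν) - l * r)] at hr
    obtain ⟨hA, hB⟩ := hr
    have hlr : l * r + C.pair μ ν ≤ 0 := by
      rcases hA with h | ⟨h, _⟩ | ⟨h, _, _⟩ <;> omega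
    have hrlam : r ≤ -(C.pair lam ν) := by
      rcases hB with h | ⟨_, h⟩ | ⟨_, h, _⟩ <;> omega
    refine le_min (hdivle r hlr) ?_
    exact_mod_cast hrlam

end DoubleAffineBruhat
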